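/- Under the same hypotheses, the lower separation bound holds: (y−x)e^{−At} + (Λ_{x,y}/A)(1−e^{−At}) ≤ c(y,t) − c(x,t), where Λ_{x,y} = ‖K‖_∞²‖K'''‖_∞ max{μ({x})³, μ({y})³}. In particular, characteristic curves never cross, and if x is an atom of μ then c(·,t) has a jump discontinuity at x of size at least (2Λ_{x,x}/A)(1−e^{−At}) > 0 for every t > 0. -/

import Mathlib

open MeasureTheory

/-- The bi-Helmholtz kernel `K(x) = (1/(4α²))(α+|x|)e^{-|x|/α}`. -/
noncomputable def biHelmholtzK (α : ℝ) (x : ℝ) : ℝ :=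
  (1 / (4 * α ^ 2)) * (α + |x|) * Real.exp (-|x| / α)

noncomputable def linE (α a b x : ℝ) : ℝ := (a + b * x) * Real.exp (-x / α)

lemma linE_hasDerivAt (α : ℝ) (hα : α ≠ 0) (a b x : ℝ) :
    HasDerivAt (linE α a b) (linE α (b - a/α) (-(b/α)) x) x := by
  have h1 : HasDerivAt (fun x : ℝ => a + b * x) b x := by
    simpa using ((hasDerivAt_id x).const_mul b).const_add a
  have h2 : HasDerivAt (fun x : ℝ => Real.exp (-x / α)) ((-1/α) * Real.exp (-x / α)) x := by
    have h : HasDerivAt (fun x : ℝ => -x / α) (-1/α) x := by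
      simpa using ((hasDerivAt_id x).neg.div_const α)
    simpa [mul_comm] using h.exp
  have := h1.mul h2
  refine HasDerivAt.congr_deriv this ?_
  unfold linE
  field_simp
  ring

lemma linE_deriv (α : ℝ) (hα : α ≠ 0) (a b : ℝ) :
    deriv (linE α a b) = linE α (b - a/α) (-(b/α)) :=
  funext fun x => (linE_hasDerivAt α hα a b x).deriv

lemma linE_neg_hasDerivAt (α : ℝ) (hα : α ≠ 0) (a b x : ℝ) :
    HasDerivAt (fun v => linE α a b (-v)) (-(linE α (b - a/α) (-(b/α)) (-x))) x := by
  have := (linE_hasDerivAt α hα a b (-x)).comp x (hasDerivAt_neg x)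
  simpa [Function.comp_def] using this

lemma iter3_pos (α : ℝ) (hα : 0 < α) (u : ℝ) (hu : 0 < u) :
    iteratedDeriv 3 (biHelmholtzK α) u = linE α (1/(2*α^4)) (-(1/(4*α^5))) u := by
  have hα' : α ≠ 0 := ne_of_gt hα
  have hev : biHelmholtzK α =ᶠ[nhds u] linE α (1/(4*α)) (1/(4*α^2)) := by
    filter_upwards [Ioi_mem_nhds hu] with v hv
    have : |v| = v := abs_of_pos hv
    unfold biHelmholtzK linE
    rw [this]
    have h4 : (4:ℝ) * α ^ 2 ≠ 0 := by positivity
    field_simp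
  have key : iteratedDeriv 3 (biHelmholtzK α) u
      = iteratedDeriv 3 (linE α (1/(4*α)) (1/(4*α^2))) u := by
    simp only [iteratedDeriv_succ, iteratedDeriv_zero]
    exact (hev.deriv.deriv).deriv_eq
  rw [key]
  simp only [iteratedDeriv_succ, iteratedDeriv_zero]
  rw [linE_deriv α hα', linE_deriv α hα', linE_deriv α hα']
  congr 1 <;> field_simp <;> ring


lemma linE_neg_deriv (α : ℝ) (hα : α ≠ 0) (a b : ℝ) :
    deriv (fun v => linE α a b (-v)) = fun v => -(linE α (b - a/α) (-(b/α)) (-v)) := by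
  funext x
  have := (linE_hasDerivAt α hα a b (-x)).comp x (hasDerivAt_neg x)
  simpa [Function.comp_def] using this.deriv

lemma iter3_neg (α : ℝ) (hα : 0 < α) (u : ℝ) (hu : u < 0) :
    iteratedDeriv 3 (biHelmholtzK α) u = -(linE α (1/(2*α^4)) (-(1/(4*α^5))) (-u)) := by
  have hα' : α ≠ 0 := ne_of_gt hα
  have hev : biHelmholtzK α =ᶠ[nhds u] (fun v => linE α (1/(4*α)) (1/(4*α^2)) (-v)) := by
    filter_upwards [Iio_mem_nhds hu] with v hv
    have : |v| = -v := abs_of_neg hv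
    unfold biHelmholtzK linE
    rw [this]
    field_simp
  have key : iteratedDeriv 3 (biHelmholtzK α) u
      = iteratedDeriv 3 (fun v => linE α (1/(4*α)) (1/(4*α^2)) (-v)) u := by
    simp only [iteratedDeriv_succ, iteratedDeriv_zero]
    exact (hev.deriv.deriv).deriv_eq
  rw [key]
  simp only [iteratedDeriv_succ, iteratedDeriv_zero]
  rw [linE_neg_deriv α hα']
  have h2 : deriv (fun v => -(linE α (1/(4*α^2) - 1/(4*α)/α) (-(1/(4*α^2)/α)) (-v)))
      = fun v => linE α (-(1/(4*α^2)/α) - (1/(4*α^2) - 1/(4*α)/α)/α) (-(-(1/(4*α^2)/α)/α)) (-v) := by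
    funext x
    rw [deriv.fun_neg]
    rw [linE_neg_deriv α hα']
    ring
  rw [h2, linE_neg_deriv α hα']
  unfold linE
  field_simp
  ring


lemma K_le (α : ℝ) (hα : 0 < α) (x : ℝ) : biHelmholtzK α x ≤ 1 / (4 * α) := by
  unfold biHelmholtzK
  set s := |x| with hs
  have hs0 : 0 ≤ s := abs_nonneg x
  have hE := Real.add_one_le_exp (s / α)
  have hprod : Real.exp (-s / α) * Real.exp (s / α) = 1 := by
    rw [← Real.exp_add]; ring_nf; exact Real.exp_zero
  have hEp : 0 < Real.exp (s / α) := Real.exp_pos _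
  have hEn : 0 < Real.exp (-s / α) := Real.exp_pos _
  have h2 : α + s ≤ α * Real.exp (s / α) := by
    have := (div_le_iff₀ hα).mp (by linarith : s / α ≤ Real.exp (s / α) - 1)
    nlinarith
  have h1 : (α + s) * Real.exp (-s / α) ≤ α := by
    calc (α + s) * Real.exp (-s / α) ≤ (α * Real.exp (s / α)) * Real.exp (-s / α) :=
          mul_le_mul_of_nonneg_right h2 hEn.le
      _ = α := by rw [mul_assoc, mul_comm (Real.exp (s/α)), hprod, mul_one]
  calc 1 / (4 * α ^ 2) * (α + s) * Real.exp (-s / α)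
      = 1 / (4 * α ^ 2) * ((α + s) * Real.exp (-s / α)) := by ring
    _ ≤ 1 / (4 * α ^ 2) * α := by
        apply mul_le_mul_of_nonneg_left h1 (by positivity)
    _ = 1 / (4 * α) := by field_simp

lemma k3_abs (α : ℝ) (hα : 0 < α) (u : ℝ) (hu : 0 ≤ u) :
    |linE α (1/(2*α^4)) (-(1/(4*α^5))) u| ≤ 1 / (2 * α^4) := by
  unfold linE
  have hE := Real.add_one_le_exp (u / α)
  have hprod : Real.exp (-u / α) * Real.exp (u / α) = 1 := by
    rw [← Real.exp_add]; ring_nf; exact Real.exp_zero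
  have hEp : 0 < Real.exp (u / α) := Real.exp_pos _
  have hEn : 0 < Real.exp (-u / α) := Real.exp_pos _
  have hE1 : 1 ≤ Real.exp (u / α) := by
    have : 0 ≤ u / α := by positivity
    linarith
  rw [abs_mul, abs_of_pos hEn]
  have h0 : (1/(2*α^4) + -(1/(4*α^5)) * u) = (2*α - u)/(4*α^5) := by field_simp; ring
  rw [h0, abs_div, abs_of_pos (show (0:ℝ) < 4*α^5 by positivity)]
  have h1 : |2*α - u| ≤ 2*α + u := by
    rw [abs_le]; constructor <;> linarith
  have h2 : 2*α + u ≤ 2*α * Real.exp (u / α) := by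
    have := (div_le_iff₀ hα).mp (by linarith : u / α ≤ Real.exp (u / α) - 1)
    nlinarith
  have h3 : (2*α + u) * Real.exp (-u / α) ≤ 2*α := by
    calc (2*α + u) * Real.exp (-u / α) ≤ (2*α * Real.exp (u / α)) * Real.exp (-u / α) :=
          mul_le_mul_of_nonneg_right h2 hEn.le
      _ = 2*α := by rw [mul_assoc, mul_comm (Real.exp (u/α)), hprod, mul_one]
  calc |2*α - u| / (4*α^5) * Real.exp (-u / α)
      ≤ (2*α + u) / (4*α^5) * Real.exp (-u / α) := by
        apply mul_le_mul_of_nonneg_right _ hEn.le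
        exact div_le_div_of_nonneg_right h1 (by positivity)
    _ = ((2*α + u) * Real.exp (-u / α)) / (4*α^5) := by ring
    _ ≤ 2*α / (4*α^5) := by
        exact div_le_div_of_nonneg_right h3 (by positivity)
    _ = 1 / (2*α^4) := by field_simp; ring

lemma linE_cont (α a b : ℝ) : Continuous (linE α a b) := by
  unfold linE; fun_prop

lemma K3_bound (α : ℝ) (hα : 0 < α) (u : ℝ) (hu : u ≠ 0) :
    |iteratedDeriv 3 (biHelmholtzK α) u| ≤ 1 / (2 * α ^ 4) := by
  rcases hu.lt_or_gt with h | h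
  · rw [iter3_neg α hα u h, abs_neg]
    exact k3_abs α hα (-u) (by linarith)
  · rw [iter3_pos α hα u h]
    exact k3_abs α hα u h.le

lemma K3_meas (α : ℝ) : Measurable (iteratedDeriv 3 (biHelmholtzK α)) := by
  have : iteratedDeriv 3 (biHelmholtzK α) = deriv (deriv (deriv (biHelmholtzK α))) := by
    simp [iteratedDeriv_succ, iteratedDeriv_zero]
  rw [this]
  exact measurable_deriv _

lemma K_cont (α : ℝ) : Continuous (biHelmholtzK α) := by
  unfold biHelmholtzK; fun_prop

lemma k3_near_zero (α : ℝ) (hα : 0 < α) (LK3 : ℝ)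
    (hLK3p : ∀ a b : ℝ, 0 < a → 0 < b →
      |iteratedDeriv 3 (biHelmholtzK α) a - iteratedDeriv 3 (biHelmholtzK α) b| ≤ LK3 * |a - b|)
    (u : ℝ) (hu : 0 < u) :
    |linE α (1/(2*α^4)) (-(1/(4*α^5))) u - 1/(2*α^4)| ≤ LK3 * u := by
  have hcont : ContinuousWithinAt
      (fun v => |linE α (1/(2*α^4)) (-(1/(4*α^5))) u - linE α (1/(2*α^4)) (-(1/(4*α^5))) v|)
      (Set.Ioi 0) 0 :=
    ((continuous_const.sub (linE_cont α _ _)).abs).continuousWithinAt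
  have h0 : linE α (1/(2*α^4)) (-(1/(4*α^5))) 0 = 1/(2*α^4) := by
    unfold linE; simp
  have htf : Filter.Tendsto
      (fun v => |linE α (1/(2*α^4)) (-(1/(4*α^5))) u - linE α (1/(2*α^4)) (-(1/(4*α^5))) v|)
      (nhdsWithin 0 (Set.Ioi 0)) (nhds |linE α (1/(2*α^4)) (-(1/(4*α^5))) u - 1/(2*α^4)|) := by
    have := hcont.tendsto
    rwa [h0] at this
  have htg : Filter.Tendsto (fun v : ℝ => LK3 * |u - v|) (nhdsWithin 0 (Set.Ioi 0))
      (nhds (LK3 * u)) := by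
    have : Filter.Tendsto (fun v : ℝ => LK3 * |u - v|) (nhds 0) (nhds (LK3 * |u - 0|)) :=
      (continuous_const.mul (continuous_const.sub continuous_id).abs).tendsto 0
    rw [sub_zero, abs_of_pos hu] at this
    exact this.mono_left nhdsWithin_le_nhds
  refine le_of_tendsto_of_tendsto htf htg ?_
  filter_upwards [self_mem_nhdsWithin] with v hv
  have hv' : (0:ℝ) < v := hv
  have := hLK3p u v hu hv'
  rwa [iter3_pos α hα u hu, iter3_pos α hα v hv'] at this

lemma K_zero (α : ℝ) (hα : 0 < α) : biHelmholtzK α 0 = 1 / (4 * α) := by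
  unfold biHelmholtzK
  simp only [abs_zero, neg_zero, zero_div, Real.exp_zero]
  field_simp
  ring

lemma K_nonneg (α : ℝ) (hα : 0 < α) (x : ℝ) : 0 ≤ biHelmholtzK α x := by
  unfold biHelmholtzK
  have h1 : (0:ℝ) ≤ α + |x| := by have := abs_nonneg x; linarith
  have h2 := (Real.exp_pos (-|x| / α)).le
  have h3 : (0:ℝ) ≤ 1 / (4 * α ^ 2) := by positivity
  exact mul_nonneg (mul_nonneg h3 h1) h2

set_option maxHeartbeats 4000000 in
lemma main_bound (α : ℝ) (hα : 0 < α)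
    (μ : Measure ℝ) [IsFiniteMeasure μ] (hμ : μ Set.univ ≤ 1)
    (LK LK3 : ℝ)
    (hLK : ∀ a b : ℝ, |biHelmholtzK α a - biHelmholtzK α b| ≤ LK * |a - b|)
    (hLK3p : ∀ a b : ℝ, 0 < a → 0 < b →
      |iteratedDeriv 3 (biHelmholtzK α) a - iteratedDeriv 3 (biHelmholtzK α) b| ≤ LK3 * |a - b|)
    (hLK3m : ∀ a b : ℝ, a < 0 → b < 0 →
      |iteratedDeriv 3 (biHelmholtzK α) a - iteratedDeriv 3 (biHelmholtzK α) b| ≤ LK3 * |a - b|)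
    (f : ℝ → ℝ) (hf : StrictMono f) (hfm : Measurable f)
    (x y : ℝ) (hxy : x < y) :
    (1/(4*α))^2 * (1/(2*α^4)) * max ((μ {x}).toReal^3) ((μ {y}).toReal^3)
      - (2*(1/(4*α))*(2*LK*(1/(2*α^4)) + (1/(4*α))*LK3)) * (f y - f x)
    ≤ (∫ z, biHelmholtzK α (f y - f z) ∂μ)^2 *
        (∫ z in ({y}ᶜ : Set ℝ), iteratedDeriv 3 (biHelmholtzK α) (f y - f z) ∂μ)
      - (∫ z, biHelmholtzK α (f x - f z) ∂μ)^2 *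
        (∫ z in ({x}ᶜ : Set ℝ), iteratedDeriv 3 (biHelmholtzK α) (f x - f z) ∂μ) := by
  have hα' : α ≠ 0 := ne_of_gt hα
  set M : ℝ := 1/(4*α) with hM
  set M3 : ℝ := 1/(2*α^4) with hM3
  have hMpos : 0 < M := by rw [hM]; positivity
  have hM3pos : 0 < M3 := by rw [hM3]; positivity
  have hLK0 : 0 ≤ LK := by
    have h1 := hLK 0 1
    have h2 := abs_nonneg (biHelmholtzK α 0 - biHelmholtzK α 1)
    have h3 : |(0:ℝ) - 1| = 1 := by norm_num
    rw [h3, mul_one] at h1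
    linarith
  have hLK30 : 0 ≤ LK3 := by
    have h1 := hLK3p 1 2 one_pos two_pos
    have h2 := abs_nonneg (iteratedDeriv 3 (biHelmholtzK α) 1 - iteratedDeriv 3 (biHelmholtzK α) 2)
    have h3 : |(1:ℝ) - 2| = 1 := by norm_num
    rw [h3, mul_one] at h1
    linarith
  have hμs : ∀ s : Set ℝ, (μ s).toReal ≤ 1 := fun s => by
    have h1 : μ s ≤ 1 := le_trans (measure_mono (Set.subset_univ s)) hμ
    calc (μ s).toReal ≤ (1 : ENNReal).toReal := ENNReal.toReal_mono (by norm_num) h1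
      _ = 1 := by simp
  have hμnn : ∀ s : Set ℝ, 0 ≤ (μ s).toReal := fun s => ENNReal.toReal_nonneg
  set a : ℝ := (μ {x}).toReal with ha
  set b : ℝ := (μ {y}).toReal with hb
  have hab1 : a + b ≤ 1 := by
    have hdis : Disjoint ({x} : Set ℝ) {y} := by simp [hxy.ne]
    have hun := measure_union (μ := μ) hdis (measurableSet_singleton y)
    have h1 : μ {x} + μ {y} ≤ 1 := by
      rw [← hun]; exact le_trans (measure_mono (Set.subset_univ _)) hμ
    calc a + b = (μ {x} + μ {y}).toReal :=
          (ENNReal.toReal_add (measure_ne_top μ _) (measure_ne_top μ _)).symm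
      _ ≤ (1 : ENNReal).toReal := ENNReal.toReal_mono (by norm_num) h1
      _ = 1 := by simp
  have ha0 : 0 ≤ a := hμnn _
  have hb0 : 0 ≤ b := hμnn _
  set G : ℝ := f y - f x with hG
  have hGpos : 0 < G := sub_pos.mpr (hf hxy)
  -- H integrability and bounds
  have hKint : ∀ p : ℝ, Integrable (fun z => biHelmholtzK α (f p - f z)) μ := by
    intro p
    refine Integrable.mono' (integrable_const M) ?_ (Filter.Eventually.of_forall fun z => ?_)
    · exact ((K_cont α).measurable.comp (measurable_const.sub hfm)).aestronglyMeasurable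
    · rw [Real.norm_eq_abs, abs_of_nonneg (K_nonneg α hα _)]
      exact K_le α hα _
  set Hx : ℝ := ∫ z, biHelmholtzK α (f x - f z) ∂μ with hHx
  set Hy : ℝ := ∫ z, biHelmholtzK α (f y - f z) ∂μ with hHy
  have hHnnx : 0 ≤ Hx := integral_nonneg fun z => K_nonneg α hα _
  have hHnny : 0 ≤ Hy := integral_nonneg fun z => K_nonneg α hα _
  have hHle : ∀ p : ℝ, (∫ z, biHelmholtzK α (f p - f z) ∂μ) ≤ M := by
    intro p
    calc (∫ z, biHelmholtzK α (f p - f z) ∂μ) ≤ ∫ _, M ∂μ :=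
          integral_mono (hKint p) (integrable_const M) fun z => K_le α hα _
      _ = (μ Set.univ).toReal • M := by rw [integral_const]; rfl
      _ ≤ M := by
          rw [smul_eq_mul]
          nlinarith [hμs Set.univ, hμnn Set.univ]
  have hHlex : Hx ≤ M := hHle x
  have hHley : Hy ≤ M := hHle y
  have hHlow : ∀ p : ℝ, M * (μ {p}).toReal ≤ ∫ z, biHelmholtzK α (f p - f z) ∂μ := by
    intro p
    have h1 : (∫ z in ({p} : Set ℝ), biHelmholtzK α (f p - f z) ∂μ)
        ≤ ∫ z, biHelmholtzK α (f p - f z) ∂μ :=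
      setIntegral_le_integral (hKint p) (Filter.Eventually.of_forall fun z => K_nonneg α hα _)
    rw [integral_singleton] at h1
    simp only [sub_self, K_zero α hα, smul_eq_mul] at h1
    rw [hM]
    rw [measureReal_def] at h1
    linarith [h1] -- reorder multiplication
  -- I integrability
  have hK3sm : ∀ p : ℝ, AEStronglyMeasurable
      (fun z => iteratedDeriv 3 (biHelmholtzK α) (f p - f z)) (μ.restrict (Set.univ : Set ℝ)ᶜᶜ) := by
    intro p
    exact ((K3_meas α).comp (measurable_const.sub hfm)).aestronglyMeasurable
  have hint : ∀ p : ℝ, ∀ s : Set ℝ, MeasurableSet s → (∀ z ∈ s, z ≠ p) →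
      IntegrableOn (fun z => iteratedDeriv 3 (biHelmholtzK α) (f p - f z)) s μ := by
    intro p s hs hsp
    refine Integrable.mono' (integrable_const M3)
      (((K3_meas α).comp (measurable_const.sub hfm)).aestronglyMeasurable.restrict)
      (ae_restrict_of_forall_mem hs fun z hz => ?_)
    have hne : f p - f z ≠ 0 := sub_ne_zero.mpr (hf.injective.ne (Ne.symm (hsp z hz)))
    rw [Real.norm_eq_abs, hM3]
    exact K3_bound α hα _ hne
  have hIbnd : ∀ p : ℝ, ∀ s : Set ℝ, (∀ z ∈ s, z ≠ p) →
      |∫ z in s, iteratedDeriv 3 (biHelmholtzK α) (f p - f z) ∂μ| ≤ M3 := by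
    intro p s hsp
    have h1 := norm_setIntegral_le_of_norm_le_const (μ := μ) (s := s) (C := M3)
      (measure_lt_top μ s)
      (fun z hz => by
        rw [Real.norm_eq_abs, hM3]
        exact K3_bound α hα _ (sub_ne_zero.mpr (hf.injective.ne (Ne.symm (hsp z hz)))))
    rw [Real.norm_eq_abs] at h1
    calc |∫ z in s, iteratedDeriv 3 (biHelmholtzK α) (f p - f z) ∂μ| ≤ M3 * (μ s).toReal := h1
      _ ≤ M3 := by nlinarith [hμs s, hμnn s]
  -- H difference bound
  have hHdiff : |Hy - Hx| ≤ LK * G := by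
    have heq : Hy - Hx = ∫ z, (biHelmholtzK α (f y - f z) - biHelmholtzK α (f x - f z)) ∂μ :=
      (integral_sub (hKint y) (hKint x)).symm
    rw [heq]
    refine le_trans (by
      simpa [Real.norm_eq_abs] using norm_integral_le_integral_norm
        (μ := μ) (f := fun z => biHelmholtzK α (f y - f z) - biHelmholtzK α (f x - f z))) ?_
    have h2 : (∫ z, |biHelmholtzK α (f y - f z) - biHelmholtzK α (f x - f z)| ∂μ)
        ≤ ∫ _, LK * G ∂μ := by
      refine integral_mono ((hKint y).sub (hKint x)).abs (integrable_const _) fun z => ?_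
      have h3 := hLK (f y - f z) (f x - f z)
      have h4 : (f y - f z) - (f x - f z) = G := by rw [hG]; ring
      rwa [h4, abs_of_pos hGpos] at h3
    refine le_trans h2 ?_
    rw [integral_const, smul_eq_mul, measureReal_def]
    nlinarith [hμs Set.univ, hμnn Set.univ, mul_nonneg hLK0 hGpos.le]
  -- splitting the I integrals
  have hSm : MeasurableSet ({x, y} : Set ℝ) := (measurableSet_singleton y).insert x
  have hxy' : (x : ℝ) ≠ y := hxy.ne
  have hsety : ({y}ᶜ : Set ℝ) = {x} ∪ ({x, y} : Set ℝ)ᶜ := by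
    ext z
    simp only [Set.mem_compl_iff, Set.mem_singleton_iff, Set.mem_union, Set.mem_insert_iff,
      not_or]
    constructor
    · intro h
      by_cases hzx : z = x
      · exact Or.inl hzx
      · exact Or.inr ⟨hzx, h⟩
    · rintro (rfl | ⟨_, h⟩)
      · exact hxy.ne
      · exact h
  have hsetx : ({x}ᶜ : Set ℝ) = {y} ∪ ({x, y} : Set ℝ)ᶜ := by
    ext z
    simp only [Set.mem_compl_iff, Set.mem_singleton_iff, Set.mem_union, Set.mem_insert_iff,
      not_or]
    constructor
    · intro h
      by_cases hzy : z = y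
      · exact Or.inl hzy
      · exact Or.inr ⟨h, hzy⟩
    · rintro (rfl | ⟨h, _⟩)
      · exact hxy.ne'
      · exact h
  have hScx : ∀ z ∈ ({x, y} : Set ℝ)ᶜ, z ≠ x := by intro z hz; simp at hz; exact hz.1
  have hScy : ∀ z ∈ ({x, y} : Set ℝ)ᶜ, z ≠ y := by intro z hz; simp at hz; exact hz.2
  have hdisx : Disjoint ({x} : Set ℝ) ({x, y} : Set ℝ)ᶜ := by
    rw [Set.disjoint_left]; intro z hz; simp at hz; simp [hz]
  have hdisy : Disjoint ({y} : Set ℝ) ({x, y} : Set ℝ)ᶜ := by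
    rw [Set.disjoint_left]; intro z hz; simp at hz; simp [hz]
  have hIy_split : (∫ z in ({y}ᶜ : Set ℝ), iteratedDeriv 3 (biHelmholtzK α) (f y - f z) ∂μ)
      = a * iteratedDeriv 3 (biHelmholtzK α) G
        + ∫ z in ({x, y} : Set ℝ)ᶜ, iteratedDeriv 3 (biHelmholtzK α) (f y - f z) ∂μ := by
    rw [hsety, setIntegral_union hdisx hSm.compl
      (hint y {x} (measurableSet_singleton x) (fun z hz => by simp at hz; simp [hz, hxy']))
      (hint y _ hSm.compl hScy), integral_singleton]
    simp only [smul_eq_mul, measureReal_def]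
    rfl
  have hIx_split : (∫ z in ({x}ᶜ : Set ℝ), iteratedDeriv 3 (biHelmholtzK α) (f x - f z) ∂μ)
      = b * iteratedDeriv 3 (biHelmholtzK α) (-G)
        + ∫ z in ({x, y} : Set ℝ)ᶜ, iteratedDeriv 3 (biHelmholtzK α) (f x - f z) ∂μ := by
    rw [hsetx, setIntegral_union hdisy hSm.compl
      (hint x {y} (measurableSet_singleton y) (fun z hz => by simp at hz; simp [hz, Ne.symm hxy']))
      (hint x _ hSm.compl hScx), integral_singleton]
    simp only [smul_eq_mul, measureReal_def]
    have : f x - f y = -G := by rw [hG]; ring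
    rw [this]
  -- pointwise estimate on the complement of {x,y}
  have hpt : ∀ z ∈ ({x, y} : Set ℝ)ᶜ, -(LK3*G) ≤
      iteratedDeriv 3 (biHelmholtzK α) (f y - f z)
        - iteratedDeriv 3 (biHelmholtzK α) (f x - f z) := by
    intro z hz
    have hzx := hScx z hz
    have hzy := hScy z hz
    have harg : (f y - f z) - (f x - f z) = G := by rw [hG]; ring
    rcases lt_trichotomy z x with h | h | h
    · have h1 : 0 < f x - f z := sub_pos.mpr (hf h)
      have h2 : 0 < f y - f z := sub_pos.mpr (hf (h.trans hxy))
      have h3 := hLK3p (f y - f z) (f x - f z) h2 h1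
      rw [harg, abs_of_pos hGpos] at h3
      linarith [(abs_le.mp h3).1]
    · exact absurd h hzx
    · rcases lt_trichotomy z y with h' | h' | h'
      · have h1 : 0 < f y - f z := sub_pos.mpr (hf h')
        have h2 : f x - f z < 0 := sub_neg.mpr (hf h)
        rw [iter3_pos α hα _ h1, iter3_neg α hα _ h2]
        have hmid1 := (abs_le.mp (k3_near_zero α hα LK3 hLK3p (f y - f z) h1)).1
        have hmid2 := (abs_le.mp (k3_near_zero α hα LK3 hLK3p (-(f x - f z)) (by linarith))).1
        have hsum : LK3 * (f y - f z) + LK3 * (-(f x - f z)) = LK3 * G := by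
          rw [hG]; ring
        have : (0:ℝ) < M3 := hM3pos
        rw [← hM3] at hmid1 hmid2
        linarith
      · exact absurd h' hzy
      · have h1 : f y - f z < 0 := sub_neg.mpr (hf h')
        have h2 : f x - f z < 0 := sub_neg.mpr (hf (hxy.trans h'))
        have h3 := hLK3m (f y - f z) (f x - f z) h1 h2
        rw [harg, abs_of_pos hGpos] at h3
        linarith [(abs_le.mp h3).1]
  -- integral estimate over the complement
  have hScInt : -(LK3*G) ≤
      (∫ z in ({x, y} : Set ℝ)ᶜ, iteratedDeriv 3 (biHelmholtzK α) (f y - f z) ∂μ)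
      - ∫ z in ({x, y} : Set ℝ)ᶜ, iteratedDeriv 3 (biHelmholtzK α) (f x - f z) ∂μ := by
    rw [← integral_sub (hint y _ hSm.compl hScy) (hint x _ hSm.compl hScx)]
    have h1 : (∫ _ in ({x, y} : Set ℝ)ᶜ, -(LK3*G) ∂μ) ≤
        ∫ z in ({x, y} : Set ℝ)ᶜ, (iteratedDeriv 3 (biHelmholtzK α) (f y - f z)
          - iteratedDeriv 3 (biHelmholtzK α) (f x - f z)) ∂μ :=
      setIntegral_mono_on (integrableOn_const (measure_ne_top μ _))
        ((hint y _ hSm.compl hScy).sub (hint x _ hSm.compl hScx)) hSm.compl hpt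
    rw [setIntegral_const, smul_eq_mul, measureReal_def] at h1
    have h2 := hμs (({x, y} : Set ℝ)ᶜ)
    have h3 := hμnn (({x, y} : Set ℝ)ᶜ)
    nlinarith [mul_nonneg hLK30 hGpos.le]
  -- atom estimates
  have hatomG : M3 - LK3 * G ≤ iteratedDeriv 3 (biHelmholtzK α) G := by
    rw [iter3_pos α hα G hGpos]
    have h1 := (abs_le.mp (k3_near_zero α hα LK3 hLK3p G hGpos)).1
    rw [← hM3] at h1
    linarith
  have hatomNeg : iteratedDeriv 3 (biHelmholtzK α) (-G)
      = -(iteratedDeriv 3 (biHelmholtzK α) G) := by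
    rw [iter3_neg α hα _ (by linarith : -G < 0), iter3_pos α hα G hGpos, neg_neg]
  have hK3Gle : iteratedDeriv 3 (biHelmholtzK α) G ≤ M3 := by
    have := K3_bound α hα G (ne_of_gt hGpos)
    rw [← hM3] at this
    linarith [(abs_le.mp this).2]
  set Iy : ℝ := ∫ z in ({y}ᶜ : Set ℝ), iteratedDeriv 3 (biHelmholtzK α) (f y - f z) ∂μ with hIy
  set Ix : ℝ := ∫ z in ({x}ᶜ : Set ℝ), iteratedDeriv 3 (biHelmholtzK α) (f x - f z) ∂μ with hIx
  have hIyabs : |Iy| ≤ M3 := hIbnd y _ (fun z hz => hz)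
  have hIxabs : |Ix| ≤ M3 := hIbnd x _ (fun z hz => hz)
  have hIdiff : (a+b)*M3 - 2*(LK3*G) ≤ Iy - Ix := by
    rw [hIy_split, hIx_split, hatomNeg]
    have h3 : (a+b)*(M3 - LK3*G) ≤ (a+b) * iteratedDeriv 3 (biHelmholtzK α) G :=
      mul_le_mul_of_nonneg_left hatomG (by linarith)
    have h5 : (a+b)*(LK3*G) ≤ 1*(LK3*G) :=
      mul_le_mul_of_nonneg_right hab1 (mul_nonneg hLK30 hGpos.le)
    nlinarith [hScInt]
  -- final combination
  have hHdiff2 : |Hy^2 - Hx^2| ≤ (LK*G)*(2*M) := by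
    have heq : Hy^2 - Hx^2 = (Hy-Hx)*(Hy+Hx) := by ring
    rw [heq, abs_mul]
    refine mul_le_mul hHdiff ?_ (abs_nonneg _) (mul_nonneg hLK0 hGpos.le)
    rw [abs_of_nonneg (by linarith)]
    linarith
  rcases max_cases (a^3) (b^3) with ⟨hmax, hcmp⟩ | ⟨hmax, hcmp⟩ <;> rw [hmax]
  · -- a³ is max ; decompose around x
    have P1 : -((LK*G)*(2*M)*M3) ≤ (Hy^2 - Hx^2) * Iy := by
      have habs : |(Hy^2-Hx^2)*Iy| ≤ ((LK*G)*(2*M))*M3 := by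
        rw [abs_mul]
        exact mul_le_mul hHdiff2 hIyabs (abs_nonneg _)
          (by positivity)
      calc -((LK*G)*(2*M)*M3) ≤ -|(Hy^2-Hx^2)*Iy| := by linarith
        _ ≤ (Hy^2 - Hx^2) * Iy := neg_abs_le _
    have hHx2low : (M*a)^2 ≤ Hx^2 := by
      have h1 := hHlow x
      rw [← hHx, ← ha] at h1
      exact pow_le_pow_left₀ (by positivity) h1 2
    have hHx2up : Hx^2 ≤ M^2 := pow_le_pow_left₀ hHnnx hHlex 2
    have P2 : M^2*a^3*M3 - M^2*(2*(LK3*G)) ≤ Hx^2 * (Iy - Ix) := by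
      have h1 : Hx^2 * ((a+b)*M3 - 2*(LK3*G)) ≤ Hx^2 * (Iy - Ix) :=
        mul_le_mul_of_nonneg_left hIdiff (sq_nonneg Hx)
      have h2 : (M*a)^2 * (a*M3) ≤ Hx^2 * ((a+b)*M3) := by
        have h4 : a*M3 ≤ (a+b)*M3 := mul_le_mul_of_nonneg_right (by linarith) hM3pos.le
        nlinarith [mul_le_mul hHx2low h4 (by positivity) (sq_nonneg Hx),
          mul_nonneg (mul_nonneg ha0 hM3pos.le) (sq_nonneg (M*a))]
      have h3 : Hx^2 * (2*(LK3*G)) ≤ M^2 * (2*(LK3*G)) :=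
        mul_le_mul_of_nonneg_right hHx2up (by positivity)
      nlinarith
    nlinarith [mul_nonneg (mul_nonneg (mul_nonneg hLK0 hGpos.le) hMpos.le) hM3pos.le]
  · -- b³ is max ; decompose around y
    have P1 : -((LK*G)*(2*M)*M3) ≤ (Hy^2 - Hx^2) * Ix := by
      have habs : |(Hy^2-Hx^2)*Ix| ≤ ((LK*G)*(2*M))*M3 := by
        rw [abs_mul]
        exact mul_le_mul hHdiff2 hIxabs (abs_nonneg _) (by positivity)
      calc -((LK*G)*(2*M)*M3) ≤ -|(Hy^2-Hx^2)*Ix| := by linarith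
        _ ≤ (Hy^2 - Hx^2) * Ix := neg_abs_le _
    have hHy2low : (M*b)^2 ≤ Hy^2 := by
      have h1 := hHlow y
      rw [← hHy, ← hb] at h1
      exact pow_le_pow_left₀ (by positivity) h1 2
    have hHy2up : Hy^2 ≤ M^2 := pow_le_pow_left₀ hHnny hHley 2
    have P2 : M^2*b^3*M3 - M^2*(2*(LK3*G)) ≤ Hy^2 * (Iy - Ix) := by
      have h1 : Hy^2 * ((a+b)*M3 - 2*(LK3*G)) ≤ Hy^2 * (Iy - Ix) :=
        mul_le_mul_of_nonneg_left hIdiff (sq_nonneg Hy)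
      have h2 : (M*b)^2 * (b*M3) ≤ Hy^2 * ((a+b)*M3) := by
        have h4 : b*M3 ≤ (a+b)*M3 := mul_le_mul_of_nonneg_right (by linarith) hM3pos.le
        nlinarith [mul_le_mul hHy2low h4 (by positivity) (sq_nonneg Hy),
          mul_nonneg (mul_nonneg hb0 hM3pos.le) (sq_nonneg (M*b))]
      have h3 : Hy^2 * (2*(LK3*G)) ≤ M^2 * (2*(LK3*G)) :=
        mul_le_mul_of_nonneg_right hHy2up (by positivity)
      nlinarith
    nlinarith [mul_nonneg (mul_nonneg (mul_nonneg hLK0 hGpos.le) hMpos.le) hM3pos.le]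


set_option maxHeartbeats 1000000 in
/-- Lower separation estimate for characteristic curves:
`(y−x)e^{−At} + (Λ_{x,y}/A)(1−e^{−At}) ≤ c(y,t) − c(x,t)` where
`Λ_{x,y} = ‖K‖_∞²‖K'''‖_∞ max{μ({x})³, μ({y})³}` with `‖K‖_∞ = 1/(4α)`,
`‖K'''‖_∞ = 1/(2α⁴)`. In particular curves never cross, and at an atom `x` of `μ`
the map `c(·,t)` has a jump of size at least `(2Λ_{x,x}/A)(1−e^{−At}) > 0` for `t > 0`. -/
theorem stmt14 (α : ℝ) (hα : 0 < α)
    (μ : Measure ℝ) [IsFiniteMeasure μ] (hμ : μ Set.univ ≤ 1)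
    (LK LK3 : ℝ)
    (hLK : ∀ a b : ℝ, |biHelmholtzK α a - biHelmholtzK α b| ≤ LK * |a - b|)
    (hLK3p : ∀ a b : ℝ, 0 < a → 0 < b →
      |iteratedDeriv 3 (biHelmholtzK α) a - iteratedDeriv 3 (biHelmholtzK α) b| ≤ LK3 * |a - b|)
    (hLK3m : ∀ a b : ℝ, a < 0 → b < 0 →
      |iteratedDeriv 3 (biHelmholtzK α) a - iteratedDeriv 3 (biHelmholtzK α) b| ≤ LK3 * |a - b|)
    (A : ℝ)
    (hA : A = 2 * (1 / (4 * α)) * (2 * LK * (1 / (2 * α ^ 4)) + (1 / (4 * α)) * LK3))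
    (hApos : 0 < A)
    (c : ℝ → ℝ → ℝ)
    (hinit : ∀ x : ℝ, c x 0 = x)
    (hmono : ∀ t : ℝ, 0 ≤ t → StrictMono (fun x => c x t))
    (hmeas : ∀ t : ℝ, 0 ≤ t → Measurable (fun x => c x t))
    (hode : ∀ x : ℝ, ∀ t : ℝ, 0 ≤ t →
      HasDerivAt (fun s => c x s)
        ((∫ z, biHelmholtzK α (c x t - c z t) ∂μ) ^ 2 *
          ∫ z in {x}ᶜ, iteratedDeriv 3 (biHelmholtzK α) (c x t - c z t) ∂μ) t) :
    (∀ x y : ℝ, x < y → ∀ t : ℝ, 0 ≤ t →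
      (y - x) * Real.exp (-(A * t)) +
        ((1 / (4 * α)) ^ 2 * (1 / (2 * α ^ 4)) *
            max ((μ {x}).toReal ^ 3) ((μ {y}).toReal ^ 3) / A) *
          (1 - Real.exp (-(A * t)))
        ≤ c y t - c x t) ∧
    (∀ x : ℝ, 0 < μ {x} → ∀ t : ℝ, 0 < t →
      0 < (2 * ((1 / (4 * α)) ^ 2 * (1 / (2 * α ^ 4)) * (μ {x}).toReal ^ 3) / A) *
            (1 - Real.exp (-(A * t))) ∧
      (2 * ((1 / (4 * α)) ^ 2 * (1 / (2 * α ^ 4)) * (μ {x}).toReal ^ 3) / A) *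
            (1 - Real.exp (-(A * t)))
        ≤ sInf ((fun y => c y t) '' Set.Ioi x) - sSup ((fun y => c y t) '' Set.Iio x)) := by
  have part1 : ∀ x y : ℝ, x < y → ∀ t : ℝ, 0 ≤ t →
      (y - x) * Real.exp (-(A * t)) +
        ((1 / (4 * α)) ^ 2 * (1 / (2 * α ^ 4)) *
            max ((μ {x}).toReal ^ 3) ((μ {y}).toReal ^ 3) / A) *
          (1 - Real.exp (-(A * t)))
        ≤ c y t - c x t := by
    intro x y hxy t ht
    set Λ : ℝ := (1 / (4 * α)) ^ 2 * (1 / (2 * α ^ 4)) *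
      max ((μ {x}).toReal ^ 3) ((μ {y}).toReal ^ 3) with hΛ
    have hkey : ∀ s : ℝ, 0 ≤ s →
        Λ - A * (c y s - c x s) ≤
          ((∫ z, biHelmholtzK α (c y s - c z s) ∂μ) ^ 2 *
            ∫ z in ({y}ᶜ : Set ℝ), iteratedDeriv 3 (biHelmholtzK α) (c y s - c z s) ∂μ)
          - ((∫ z, biHelmholtzK α (c x s - c z s) ∂μ) ^ 2 *
            ∫ z in ({x}ᶜ : Set ℝ), iteratedDeriv 3 (biHelmholtzK α) (c x s - c z s) ∂μ) := by
      intro s hs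
      have hmb := main_bound α hα μ hμ LK LK3 hLK hLK3p hLK3m
        (fun z => c z s) (hmono s hs) (hmeas s hs) x y hxy
      rw [hΛ, hA]
      simpa using hmb
    set F : ℝ → ℝ := fun s => Real.exp (A * s) * (c y s - c x s) - Λ / A * Real.exp (A * s)
      with hF
    have he : ∀ s : ℝ, HasDerivAt (fun s => Real.exp (A * s)) (Real.exp (A * s) * A) s := by
      intro s
      exact ((Real.hasDerivAt_exp (A * s)).comp s ((hasDerivAt_id s).const_mul A)).congr_deriv (by simp)
    have hFd : ∀ s : ℝ, 0 ≤ s → HasDerivAt F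
        (Real.exp (A * s) * A * (c y s - c x s) +
          Real.exp (A * s) *
            (((∫ z, biHelmholtzK α (c y s - c z s) ∂μ) ^ 2 *
              ∫ z in ({y}ᶜ : Set ℝ), iteratedDeriv 3 (biHelmholtzK α) (c y s - c z s) ∂μ)
            - ((∫ z, biHelmholtzK α (c x s - c z s) ∂μ) ^ 2 *
              ∫ z in ({x}ᶜ : Set ℝ), iteratedDeriv 3 (biHelmholtzK α) (c x s - c z s) ∂μ))
          - Λ / A * (Real.exp (A * s) * A)) s := by
      intro s hs
      exact ((he s).mul ((hode y s hs).sub (hode x s hs))).sub ((he s).const_mul (Λ / A))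
    have hmonoF : MonotoneOn F (Set.Ici (0:ℝ)) := by
      apply monotoneOn_of_deriv_nonneg (convex_Ici 0)
      · intro s hs
        exact (hFd s hs).continuousAt.continuousWithinAt
      · intro s hs
        rw [interior_Ici] at hs
        exact ((hFd s (le_of_lt hs)).differentiableAt).differentiableWithinAt
      · intro s hs
        rw [interior_Ici] at hs
        rw [(hFd s hs.le).deriv]
        have hk := hkey s hs.le
        have hsimp : Λ / A * (Real.exp (A * s) * A) = Λ * Real.exp (A * s) := by
          field_simp
        rw [hsimp]
        have hprod := mul_nonneg (Real.exp_pos (A * s)).le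
          (show (0:ℝ) ≤ A * (c y s - c x s) +
            (((∫ z, biHelmholtzK α (c y s - c z s) ∂μ) ^ 2 *
              ∫ z in ({y}ᶜ : Set ℝ), iteratedDeriv 3 (biHelmholtzK α) (c y s - c z s) ∂μ)
            - ((∫ z, biHelmholtzK α (c x s - c z s) ∂μ) ^ 2 *
              ∫ z in ({x}ᶜ : Set ℝ), iteratedDeriv 3 (biHelmholtzK α) (c x s - c z s) ∂μ)) - Λ
            by linarith)
        nlinarith [hprod]
    have hF0 : F 0 ≤ F t := hmonoF (Set.mem_Ici.mpr le_rfl) (Set.mem_Ici.mpr ht) ht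
    have hF0v : F 0 = (y - x) - Λ / A := by
      rw [hF]
      simp [hinit x, hinit y]
    rw [hF0v, hF] at hF0
    have h7 : Real.exp (-(A * t)) * Real.exp (A * t) = 1 := by
      rw [← Real.exp_add]; ring_nf; exact Real.exp_zero
    have hmul := mul_le_mul_of_nonneg_left hF0 (Real.exp_pos (-(A * t))).le
    have h6 : Real.exp (-(A * t)) *
        (Real.exp (A * t) * (c y t - c x t) - Λ / A * Real.exp (A * t))
        = (c y t - c x t) - Λ / A := by
      calc Real.exp (-(A * t)) *
            (Real.exp (A * t) * (c y t - c x t) - Λ / A * Real.exp (A * t))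
          = (Real.exp (-(A * t)) * Real.exp (A * t)) * (c y t - c x t)
            - Λ / A * (Real.exp (-(A * t)) * Real.exp (A * t)) := by ring
        _ = (c y t - c x t) - Λ / A := by rw [h7]; ring
    rw [h6] at hmul
    have h8 : Real.exp (-(A * t)) * ((y - x) - Λ / A)
        = (y - x) * Real.exp (-(A * t)) - Λ / A * Real.exp (-(A * t)) := by ring
    rw [h8] at hmul
    have h9 : (Λ / A) * (1 - Real.exp (-(A * t)))
        = Λ / A - Λ / A * Real.exp (-(A * t)) := by ring
    linarith
  refine ⟨part1, ?_⟩
  intro x hx t ht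
  have ha0 : 0 < (μ {x}).toReal := ENNReal.toReal_pos (ne_of_gt hx) (measure_ne_top μ _)
  have hΛpos : 0 < (1 / (4 * α)) ^ 2 * (1 / (2 * α ^ 4)) * (μ {x}).toReal ^ 3 := by positivity
  have hE1 : 0 < 1 - Real.exp (-(A * t)) := by
    have h1 : Real.exp (-(A * t)) < 1 := by
      rw [Real.exp_lt_one_iff]
      nlinarith
    linarith
  set Λx : ℝ := (1 / (4 * α)) ^ 2 * (1 / (2 * α ^ 4)) * (μ {x}).toReal ^ 3 with hΛx
  set δ : ℝ := Λx / A * (1 - Real.exp (-(A * t))) with hδ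
  have hδ0 : 0 < δ := mul_pos (div_pos hΛpos hApos) hE1
  constructor
  · have : (2 * Λx / A) * (1 - Real.exp (-(A * t))) = 2 * δ := by rw [hδ]; ring
    rw [this]
    linarith
  · have hub : ∀ w ∈ Set.Iio x, c w t ≤ c x t - δ := by
      intro w hw
      have h1 := part1 w x hw t ht.le
      have h2 : Λx ≤ (1 / (4 * α)) ^ 2 * (1 / (2 * α ^ 4)) *
          max ((μ {w}).toReal ^ 3) ((μ {x}).toReal ^ 3) := by
        rw [hΛx]
        exact mul_le_mul_of_nonneg_left (le_max_right _ _) (by positivity)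
      have h3 : 0 ≤ (x - w) * Real.exp (-(A * t)) := by
        have : (0:ℝ) < x - w := sub_pos.mpr (Set.mem_Iio.mp hw)
        positivity
      have h4 : Λx / A * (1 - Real.exp (-(A * t)))
          ≤ ((1 / (4 * α)) ^ 2 * (1 / (2 * α ^ 4)) *
              max ((μ {w}).toReal ^ 3) ((μ {x}).toReal ^ 3) / A) * (1 - Real.exp (-(A * t))) :=
        mul_le_mul_of_nonneg_right (div_le_div_of_nonneg_right h2 hApos.le) hE1.le
      rw [hδ]
      linarith
    have hlb : ∀ w ∈ Set.Ioi x, c x t + δ ≤ c w t := by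
      intro w hw
      have h1 := part1 x w hw t ht.le
      have h2 : Λx ≤ (1 / (4 * α)) ^ 2 * (1 / (2 * α ^ 4)) *
          max ((μ {x}).toReal ^ 3) ((μ {w}).toReal ^ 3) := by
        rw [hΛx]
        exact mul_le_mul_of_nonneg_left (le_max_left _ _) (by positivity)
      have h3 : 0 ≤ (w - x) * Real.exp (-(A * t)) := by
        have : (0:ℝ) < w - x := sub_pos.mpr (Set.mem_Ioi.mp hw)
        positivity
      have h4 : Λx / A * (1 - Real.exp (-(A * t)))
          ≤ ((1 / (4 * α)) ^ 2 * (1 / (2 * α ^ 4)) *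
              max ((μ {x}).toReal ^ 3) ((μ {w}).toReal ^ 3) / A) * (1 - Real.exp (-(A * t))) :=
        mul_le_mul_of_nonneg_right (div_le_div_of_nonneg_right h2 hApos.le) hE1.le
      rw [hδ]
      linarith
    have hne1 : ((fun y => c y t) '' Set.Iio x).Nonempty :=
      ⟨c (x - 1) t, ⟨x - 1, by simp, rfl⟩⟩
    have hne2 : ((fun y => c y t) '' Set.Ioi x).Nonempty :=
      ⟨c (x + 1) t, ⟨x + 1, by simp, rfl⟩⟩
    have hs1 : sSup ((fun y => c y t) '' Set.Iio x) ≤ c x t - δ :=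
      csSup_le hne1 (by rintro v ⟨w, hw, rfl⟩; exact hub w hw)
    have hs2 : c x t + δ ≤ sInf ((fun y => c y t) '' Set.Ioi x) :=
      le_csInf hne2 (by rintro v ⟨w, hw, rfl⟩; exact hlb w hw)
    have : (2 * Λx / A) * (1 - Real.exp (-(A * t))) = 2 * δ := by rw [hδ]; ring
    rw [this]
    linarith
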